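/- (Two-level HAPOD low-rank factorization) Let S = S_1 ⊎ ... ⊎ S_r with local scaled POD modes Q_i (tolerance ε_i, projections P_i, right-singular factor Λ_i with Λ_i*Λ_i = Id), and let Ψ, Λ be the retained scaled left- and right-singular factors of the concatenation [Q_1,...,Q_r] with tolerance ε_ρ. Define Λ̃ := diag(Λ_1,...,Λ_r) ∘ Λ. Then ‖S̲ − Ψ ∘ Λ̃*‖_HS² ≤ ε_ρ² + ∑_{i=1}^r ε_i², where S̲ is the full snapshot map. -/

import Mathlib

open Finset

open RealInnerProductSpace

lemma orthoCombo {η V : Type*} [Fintype η] [DecidableEq η]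
    [NormedAddCommGroup V] [InnerProductSpace ℝ V]
    {v : η → V} (hv : Orthonormal ℝ v) (s : Finset η) (a b : η → ℝ) :
    ⟪∑ j ∈ s, a j • v j, ∑ j ∈ s, b j • v j⟫ = ∑ j ∈ s, a j * b j := by
  rw [sum_inner]
  refine Finset.sum_congr rfl fun j hj => ?_
  rw [inner_sum]
  simp_rw [real_inner_smul_left, real_inner_smul_right, orthonormal_iff_ite.mp hv,
    mul_ite, mul_one, mul_zero, Finset.sum_ite_eq, if_pos hj]

lemma euclid_inner {n : ℕ} (x y : EuclideanSpace ℝ (Fin n)) : ⟪x, y⟫ = ∑ m, x m * y m := by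
  simp [PiLp.inner_apply, RCLike.inner_apply, conj_trivial, mul_comm]

lemma sum_compl_filter {n N : ℕ} (h : N ≤ n) {β : Type*} [AddCommMonoid β] (f : Fin n → β) :
    ∑ j ∈ univ.filter (fun j : Fin n => ¬ N ≤ (j : ℕ)), f j
      = ∑ j : Fin N, f (Fin.castLE h j) := by
  refine Finset.sum_bij' (fun j hj => (⟨(j : ℕ), by simp at hj; omega⟩ : Fin N))
    (fun j _ => Fin.castLE h j) ?_ ?_ ?_ ?_ ?_
  · intro a ha; exact Finset.mem_univ _
  · intro a ha; simp [Fin.castLE]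
  · intro a ha; simp [Fin.castLE]
  · intro a ha; simp [Fin.castLE]
  · intro a ha; simp [Fin.castLE]

/-- Hilbert–Schmidt (Frobenius) inner product `⟨A, B⟩ = tr(A* B)`. -/
noncomputable def frobInner {W V : Type*}
    [NormedAddCommGroup W] [InnerProductSpace ℝ W] [FiniteDimensional ℝ W]
    [NormedAddCommGroup V] [InnerProductSpace ℝ V] [FiniteDimensional ℝ V]
    (A B : W →ₗ[ℝ] V) : ℝ :=
  LinearMap.trace ℝ W (LinearMap.adjoint A ∘ₗ B)

lemma frob_diag {ι : Type*} [Fintype ι] [DecidableEq ι]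
    {V : Type*} [NormedAddCommGroup V] [InnerProductSpace ℝ V] [FiniteDimensional ℝ V]
    (A : EuclideanSpace ℝ ι →ₗ[ℝ] V) :
    frobInner A A = ∑ i, ⟪A (EuclideanSpace.single i 1), A (EuclideanSpace.single i 1)⟫ := by
  unfold frobInner
  rw [LinearMap.trace_eq_matrix_trace ℝ (EuclideanSpace.basisFun ι ℝ).toBasis]
  rw [Matrix.trace]
  refine Finset.sum_congr rfl fun i _ => ?_
  rw [Matrix.diag_apply, LinearMap.toMatrix_apply]
  simp only [OrthonormalBasis.coe_toBasis, OrthonormalBasis.coe_toBasis_repr_apply,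
    EuclideanSpace.basisFun_apply, LinearMap.comp_apply]
  rw [EuclideanSpace.basisFun_repr, ← real_inner_comm]
  rw [show (LinearMap.adjoint A) (A (EuclideanSpace.single i 1)) i
      = inner ℝ (EuclideanSpace.single i (1:ℝ)) ((LinearMap.adjoint A) (A (EuclideanSpace.single i 1))) by
    rw [EuclideanSpace.inner_single_left]; simp]
  rw [LinearMap.adjoint_inner_right, real_inner_comm]

/-- two-level HAPOD low-rank factorization: with local truncated SVDs of the
blocks `S_i` (tolerances `ε i`) and a second truncated SVD `Ψ ∘ Λ*` of the concatenated
retained scaled modes (tolerance `ερ`), the factorization `Ψ ∘ Λ̃*` with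
`Λ̃ = diag(Λ₁,...,Λᵣ) ∘ Λ` satisfies `‖S̲ − Ψ∘Λ̃*‖_HS² ≤ ερ² + ∑ᵢ εᵢ²`. -/
theorem hapod_low_rank_factorization
    {V : Type*} [NormedAddCommGroup V] [InnerProductSpace ℝ V] [FiniteDimensional ℝ V]
    {r : ℕ} (k N : Fin r → ℕ) (hN : ∀ i, N i ≤ k i)
    (s : ∀ i, Fin (k i) → V)
    -- local SVDs
    (σ : ∀ i, Fin (k i) → ℝ) (φ : ∀ i, Fin (k i) → V)
    (lam : ∀ i, Fin (k i) → EuclideanSpace ℝ (Fin (k i)))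
    (hσa : ∀ i, Antitone (σ i)) (hσ0 : ∀ i j, 0 ≤ σ i j)
    (hφ : ∀ i, Orthonormal ℝ (φ i)) (hlam : ∀ i, Orthonormal ℝ (lam i))
    (hs : ∀ i m, s i m = ∑ j, (σ i j * lam i j m) • φ i j)
    (ε : Fin r → ℝ)
    (hloc : ∀ i, ∑ j ∈ univ.filter (fun j : Fin (k i) => N i ≤ (j : ℕ)), σ i j ^ 2 ≤ ε i ^ 2)
    -- SVD of the concatenated retained scaled modes
    {K : ℕ} (e : ((i : Fin r) × Fin (N i)) ≃ Fin K)
    (τ : Fin K → ℝ) (Φ : Fin K → V) (μ : Fin K → EuclideanSpace ℝ (Fin K))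
    (hτa : Antitone τ) (hτ0 : ∀ j, 0 ≤ τ j)
    (hΦ : Orthonormal ℝ Φ) (hμ : Orthonormal ℝ μ)
    (hQ : ∀ i (n : Fin (N i)),
      σ i (Fin.castLE (hN i) n) • φ i (Fin.castLE (hN i) n)
        = ∑ jK, (τ jK * μ jK (e ⟨i, n⟩)) • Φ jK)
    (M : ℕ) (hM : M ≤ K) (ερ : ℝ)
    (hroot : ∑ jK ∈ univ.filter (fun jK : Fin K => M ≤ (jK : ℕ)), τ jK ^ 2 ≤ ερ ^ 2)
    -- the full snapshot map
    (Sfull : EuclideanSpace ℝ ((i : Fin r) × Fin (k i)) →ₗ[ℝ] V)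
    (hSfull : ∀ i m, Sfull (EuclideanSpace.single ⟨i, m⟩ 1) = s i m)
    -- retained scaled left-singular factor Ψ and composed right factor Λ̃
    (Ψ : EuclideanSpace ℝ (Fin M) →ₗ[ℝ] V)
    (hΨ : ∀ n : Fin M, Ψ (EuclideanSpace.single n 1)
        = τ (Fin.castLE hM n) • Φ (Fin.castLE hM n))
    (Λt : EuclideanSpace ℝ (Fin M) →ₗ[ℝ] EuclideanSpace ℝ ((i : Fin r) × Fin (k i)))
    (hΛt : ∀ (n : Fin M) (i : Fin r) (m : Fin (k i)),
      Λt (EuclideanSpace.single n 1) ⟨i, m⟩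
        = ∑ j : Fin (N i), μ (Fin.castLE hM n) (e ⟨i, j⟩) * lam i (Fin.castLE (hN i) j) m) :
    frobInner (Sfull - Ψ ∘ₗ LinearMap.adjoint Λt) (Sfull - Ψ ∘ₗ LinearMap.adjoint Λt)
      ≤ ερ ^ 2 + ∑ i, ε i ^ 2 := by
  classical
  -- coordinate orthonormality facts
  have hlam' : ∀ i (j j' : Fin (k i)),
      ∑ m, lam i j m * lam i j' m = if j = j' then 1 else 0 := by
    intro i j j'
    rw [← euclid_inner]
    exact orthonormal_iff_ite.mp (hlam i) j j'
  have hμ1 : ∀ jK : Fin K, ∑ κ, μ jK κ ^ 2 = 1 := by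
    intro jK
    have h := orthonormal_iff_ite.mp hμ jK jK
    rw [if_pos rfl, euclid_inner] at h
    simpa [sq] using h
  -- the coefficient function
  set c : ∀ i : Fin r, Fin (k i) → Fin K → ℝ :=
    fun i m jK => ∑ j : Fin (N i), μ jK (e ⟨i, j⟩) * lam i (Fin.castLE (hN i) j) m with hc
  -- the two error pieces
  set T1 : ∀ i : Fin r, Fin (k i) → V := fun i m =>
    ∑ j ∈ univ.filter (fun j : Fin (k i) => N i ≤ (j : ℕ)), (σ i j * lam i j m) • φ i j with hT1
  set T2 : ∀ i : Fin r, Fin (k i) → V := fun i m =>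
    ∑ jK ∈ univ.filter (fun jK : Fin K => M ≤ (jK : ℕ)), (τ jK * c i m jK) • Φ jK with hT2
  -- adjoint coordinates
  have hadj : ∀ (i : Fin r) (m : Fin (k i)) (n : Fin M),
      (LinearMap.adjoint Λt (EuclideanSpace.single ⟨i, m⟩ 1)) n
        = c i m (Fin.castLE hM n) := by
    intro i m n
    have h1 : (LinearMap.adjoint Λt (EuclideanSpace.single ⟨i, m⟩ 1)) n
        = ⟪LinearMap.adjoint Λt (EuclideanSpace.single ⟨i, m⟩ 1),
            EuclideanSpace.single n (1:ℝ)⟫ := by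
      rw [EuclideanSpace.inner_single_right]; simp
    rw [h1, LinearMap.adjoint_inner_left, EuclideanSpace.inner_single_left]
    simp only [map_one, one_mul, conj_trivial]
    rw [hΛt]
  -- value of Ψ on the adjoint
  have hΨy : ∀ (i : Fin r) (m : Fin (k i)),
      Ψ (LinearMap.adjoint Λt (EuclideanSpace.single ⟨i, m⟩ 1))
        = ∑ n : Fin M, (τ (Fin.castLE hM n) * c i m (Fin.castLE hM n)) • Φ (Fin.castLE hM n) := by
    intro i m
    have hy : LinearMap.adjoint Λt (EuclideanSpace.single ⟨i, m⟩ 1)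
        = ∑ n : Fin M, c i m (Fin.castLE hM n) • EuclideanSpace.single n 1 := by
      conv_lhs => rw [← (EuclideanSpace.basisFun (Fin M) ℝ).sum_repr
        (LinearMap.adjoint Λt (EuclideanSpace.single ⟨i, m⟩ 1))]
      simp_rw [EuclideanSpace.basisFun_apply, EuclideanSpace.basisFun_repr, hadj]
    rw [hy, map_sum]
    refine Finset.sum_congr rfl fun n _ => ?_
    rw [map_smul, hΨ, smul_smul, mul_comm]
  -- error decomposition
  have hE : ∀ (i : Fin r) (m : Fin (k i)),
      (Sfull - Ψ ∘ₗ LinearMap.adjoint Λt) (EuclideanSpace.single ⟨i, m⟩ 1)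
        = T1 i m + T2 i m := by
    intro i m
    have h1 : (Sfull - Ψ ∘ₗ LinearMap.adjoint Λt) (EuclideanSpace.single ⟨i, m⟩ 1)
        = s i m - Ψ (LinearMap.adjoint Λt (EuclideanSpace.single ⟨i, m⟩ 1)) := by
      simp [LinearMap.sub_apply, hSfull]
    rw [h1, hΨy i m]
    have hsplit : s i m = T1 i m + ∑ jK : Fin K, (τ jK * c i m jK) • Φ jK := by
      rw [hs i m,
        ← Finset.sum_filter_add_sum_filter_not univ (fun j : Fin (k i) => N i ≤ (j : ℕ))]
      congr 1
      rw [sum_compl_filter (hN i)]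
      have hterm : ∀ j : Fin (N i),
          (σ i (Fin.castLE (hN i) j) * lam i (Fin.castLE (hN i) j) m) • φ i (Fin.castLE (hN i) j)
            = ∑ jK, (lam i (Fin.castLE (hN i) j) m * (τ jK * μ jK (e ⟨i, j⟩))) • Φ jK := by
        intro j
        rw [mul_comm, mul_smul, hQ i j, Finset.smul_sum]
        simp [smul_smul]
      simp_rw [hterm]
      rw [Finset.sum_comm]
      refine Finset.sum_congr rfl fun jK _ => ?_
      rw [← Finset.sum_smul]
      congr 1
      rw [hc, Finset.mul_sum]
      exact Finset.sum_congr rfl fun j _ => by ring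
    rw [hsplit]
    have hretained : ∑ n : Fin M,
        (τ (Fin.castLE hM n) * c i m (Fin.castLE hM n)) • Φ (Fin.castLE hM n)
          = ∑ jK ∈ univ.filter (fun jK : Fin K => ¬ M ≤ (jK : ℕ)), (τ jK * c i m jK) • Φ jK := by
      rw [sum_compl_filter hM]
    rw [hretained,
      ← Finset.sum_filter_add_sum_filter_not univ (fun jK : Fin K => M ≤ (jK : ℕ))
        (fun jK => (τ jK * c i m jK) • Φ jK)]
    rw [hT2]
    abel
  -- crossed term vanishes after summing over m
  have hz : ∀ (i : Fin r) (j : Fin (k i)), (N i ≤ (j : ℕ)) → ∀ jK : Fin K,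
      ∑ m, lam i j m * c i m jK = 0 := by
    intro i j hj jK
    rw [hc]
    simp_rw [Finset.mul_sum]
    rw [Finset.sum_comm]
    refine Finset.sum_eq_zero fun j' _ => ?_
    have h1 : ∑ m, lam i j m * (μ jK (e ⟨i, j'⟩) * lam i (Fin.castLE (hN i) j') m)
        = μ jK (e ⟨i, j'⟩) * ∑ m, lam i j m * lam i (Fin.castLE (hN i) j') m := by
      rw [Finset.mul_sum]; exact Finset.sum_congr rfl fun m _ => by ring
    rw [h1, hlam', if_neg, mul_zero]
    intro h
    have : (j : ℕ) = (j' : ℕ) := by rw [h]; simp [Fin.castLE]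
    have := j'.isLt
    omega
  have hcross : ∀ (i : Fin r), ∑ m, ⟪T1 i m, T2 i m⟫ = 0 := by
    intro i
    have hval : ∀ m, ⟪T1 i m, T2 i m⟫
        = ∑ j ∈ univ.filter (fun j : Fin (k i) => N i ≤ (j : ℕ)),
            ∑ jK ∈ univ.filter (fun jK : Fin K => M ≤ (jK : ℕ)),
              (σ i j * lam i j m) * ((τ jK * c i m jK) * ⟪φ i j, Φ jK⟫) := by
      intro m
      rw [hT1, hT2, sum_inner]
      refine Finset.sum_congr rfl fun j _ => ?_
      rw [inner_sum]
      refine Finset.sum_congr rfl fun jK _ => ?_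
      rw [real_inner_smul_left, real_inner_smul_right]
    simp_rw [hval]
    rw [Finset.sum_comm]
    refine Finset.sum_eq_zero fun j hj => ?_
    rw [Finset.sum_comm]
    refine Finset.sum_eq_zero fun jK _ => ?_
    have h2 : ∑ m, (σ i j * lam i j m) * ((τ jK * c i m jK) * ⟪φ i j, Φ jK⟫)
        = (σ i j * τ jK * ⟪φ i j, Φ jK⟫) * ∑ m, lam i j m * c i m jK := by
      rw [Finset.mul_sum]; exact Finset.sum_congr rfl fun m _ => by ring
    rw [h2, hz i j (by simpa using (Finset.mem_filter.mp hj).2) jK, mul_zero]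
  -- c sums to one
  have hcc : ∀ jK : Fin K, ∑ i : Fin r, ∑ m, c i m jK ^ 2 = 1 := by
    intro jK
    have hinner : ∀ i : Fin r, ∑ m, c i m jK ^ 2 = ∑ j' : Fin (N i), μ jK (e ⟨i, j'⟩) ^ 2 := by
      intro i
      have h1 : ∀ m : Fin (k i), c i m jK ^ 2
          = ∑ j' : Fin (N i), ∑ j'' : Fin (N i),
              (μ jK (e ⟨i, j'⟩) * μ jK (e ⟨i, j''⟩))
                * (lam i (Fin.castLE (hN i) j') m * lam i (Fin.castLE (hN i) j'') m) := by
        intro m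
        rw [hc, sq, Finset.sum_mul_sum]
        exact Finset.sum_congr rfl fun j' _ => Finset.sum_congr rfl fun j'' _ => by ring
      simp_rw [h1]
      rw [Finset.sum_comm]
      refine Finset.sum_congr rfl fun j' _ => ?_
      rw [Finset.sum_comm]
      have h2 : ∀ j'' : Fin (N i),
          ∑ m, (μ jK (e ⟨i, j'⟩) * μ jK (e ⟨i, j''⟩))
              * (lam i (Fin.castLE (hN i) j') m * lam i (Fin.castLE (hN i) j'') m)
            = (μ jK (e ⟨i, j'⟩) * μ jK (e ⟨i, j''⟩))
              * ∑ m, lam i (Fin.castLE (hN i) j') m * lam i (Fin.castLE (hN i) j'') m := by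
        intro j''; rw [Finset.mul_sum]
      simp_rw [h2, hlam']
      have h3 : ∀ j'' : Fin (N i),
          (if Fin.castLE (hN i) j' = Fin.castLE (hN i) j'' then (1:ℝ) else 0)
            = if j' = j'' then 1 else 0 := by
        intro j''
        by_cases h : j' = j''
        · simp [h]
        · rw [if_neg h, if_neg]
          intro hh
          exact h (by
            have : (j' : ℕ) = (j'' : ℕ) := by
              have := congrArg (Fin.val) hh
              simpa [Fin.castLE] using this
            exact Fin.ext this)
      simp_rw [h3, mul_ite, mul_one, mul_zero, Finset.sum_ite_eq, Finset.mem_univ, if_pos]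
      simp [sq]
    simp_rw [hinner]
    have h4 : ∑ i : Fin r, ∑ j' : Fin (N i), μ jK (e ⟨i, j'⟩) ^ 2
        = ∑ p : (i : Fin r) × Fin (N i), μ jK (e p) ^ 2 := by
      rw [← Finset.univ_sigma_univ, Finset.sum_sigma]
    rw [h4, Equiv.sum_comp e (fun κ => μ jK κ ^ 2), hμ1]
  -- main computation
  rw [frob_diag, ← Finset.univ_sigma_univ, Finset.sum_sigma]
  have key : ∀ i : Fin r,
      ∑ m, ⟪(Sfull - Ψ ∘ₗ LinearMap.adjoint Λt) (EuclideanSpace.single ⟨i, m⟩ 1),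
              (Sfull - Ψ ∘ₗ LinearMap.adjoint Λt) (EuclideanSpace.single ⟨i, m⟩ 1)⟫
        = (∑ j ∈ univ.filter (fun j : Fin (k i) => N i ≤ (j : ℕ)), σ i j ^ 2)
          + ∑ jK ∈ univ.filter (fun jK : Fin K => M ≤ (jK : ℕ)),
              τ jK ^ 2 * ∑ m, c i m jK ^ 2 := by
    intro i
    have hsum : ∀ m : Fin (k i),
        ⟪(Sfull - Ψ ∘ₗ LinearMap.adjoint Λt) (EuclideanSpace.single ⟨i, m⟩ 1),
          (Sfull - Ψ ∘ₗ LinearMap.adjoint Λt) (EuclideanSpace.single ⟨i, m⟩ 1)⟫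
          = (∑ j ∈ univ.filter (fun j : Fin (k i) => N i ≤ (j : ℕ)), (σ i j * lam i j m) ^ 2)
            + 2 * ⟪T1 i m, T2 i m⟫
            + ∑ jK ∈ univ.filter (fun jK : Fin K => M ≤ (jK : ℕ)), (τ jK * c i m jK) ^ 2 := by
      intro m
      rw [hE i m, real_inner_add_add_self]
      rw [hT1, hT2, orthoCombo (hφ i), orthoCombo hΦ]
      simp_rw [← sq]
    simp_rw [hsum]
    rw [Finset.sum_add_distrib, Finset.sum_add_distrib, ← Finset.mul_sum, hcross i, mul_zero,
      add_zero]
    congr 1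
    · rw [Finset.sum_comm]
      refine Finset.sum_congr rfl fun j _ => ?_
      simp_rw [mul_pow]
      rw [← Finset.mul_sum]
      have h2 : ∑ m, lam i j m ^ 2 = 1 := by
        have := hlam' i j j
        rw [if_pos rfl] at this
        simpa [sq] using this
      rw [h2, mul_one]
    · rw [Finset.sum_comm]
      refine Finset.sum_congr rfl fun jK _ => ?_
      simp_rw [mul_pow]
      rw [← Finset.mul_sum]
  simp_rw [key]
  rw [Finset.sum_add_distrib]
  have hswap : ∑ i : Fin r, ∑ jK ∈ univ.filter (fun jK : Fin K => M ≤ (jK : ℕ)),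
      τ jK ^ 2 * ∑ m, c i m jK ^ 2
        = ∑ jK ∈ univ.filter (fun jK : Fin K => M ≤ (jK : ℕ)), τ jK ^ 2 := by
    rw [Finset.sum_comm]
    refine Finset.sum_congr rfl fun jK _ => ?_
    rw [← Finset.mul_sum, hcc jK, mul_one]
  rw [hswap, add_comm]
  exact add_le_add hroot (Finset.sum_le_sum fun i _ => hloc i)
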